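/- Let H be a real Hilbert space, C > 0, k ≥ 2 a real number, n ≥ 1, and z₁, …, z_n ∈ H. Let Π_C denote the projection onto the closed ball of radius C centered at the origin. Then ‖ (1/n)∑_{i=1}^{n} Π_C(z_i) − (1/n)∑_{i=1}^{n} z_i ‖ ≤ ( (1/n)∑_{i=1}^{n} ‖z_i‖^k ) / ( (k−1)·C^{k−1} ). That is, the bias of the clipped empirical mean is at most r̂^{(k)} / ((k−1)C^{k−1}), where r̂^{(k)} is the k-th empirical moment of the vectors. -/
import Mathlib


/-- Projection onto the closed ball of radius `C` centered at the origin. -/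
noncomputable def clip {H : Type*} [NormedAddCommGroup H] [NormedSpace ℝ H]
    (C : ℝ) (z : H) : H :=
  if ‖z‖ ≤ C then z else (C / ‖z‖) • z

lemma clip_dist_le {H : Type*} [NormedAddCommGroup H] [NormedSpace ℝ H]
    (C : ℝ) (hC : 0 < C) (k : ℝ) (hk : 2 ≤ k) (z : H) :
    ‖clip C z - z‖ ≤ ‖z‖ ^ k / ((k - 1) * C ^ (k - 1)) := by
  have hk1 : (0:ℝ) < k - 1 := by linarith
  have hCpow : 0 < C ^ (k - 1) := Real.rpow_pos_of_pos hC _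
  by_cases h : ‖z‖ ≤ C
  · rw [clip, if_pos h]
    simp only [sub_self, norm_zero]
    positivity
  · push_neg at h
    have hr : 0 < ‖z‖ := lt_trans hC h
    rw [clip, if_neg (not_le.mpr h)]
    have heq : (C / ‖z‖) • z - z = (C / ‖z‖ - 1) • z := by
      rw [sub_smul, one_smul]
    rw [heq, norm_smul, Real.norm_eq_abs]
    have hle : C / ‖z‖ ≤ 1 := (div_le_one hr).mpr h.le
    rw [abs_of_nonpos (by linarith), neg_sub]
    have harith : (1 - C / ‖z‖) * ‖z‖ = ‖z‖ - C := by
      field_simp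
    rw [harith]
    -- Bernoulli: (‖z‖/C)^k ≥ 1 + k*(‖z‖/C - 1)
    set t : ℝ := ‖z‖ / C with ht
    have ht1 : 1 < t := (one_lt_div hC).mpr h
    have hbern : 1 + k * (t - 1) ≤ t ^ k := by
      have := one_add_mul_self_le_rpow_one_add (s := t - 1) (by linarith) (by linarith : 1 ≤ k)
      simpa using this
    have hkey : (k - 1) * (t - 1) ≤ t ^ k := by nlinarith
    -- translate: ‖z‖ = C * t, ‖z‖^k = C^k * t^k
    have hzk : ‖z‖ ^ k = C ^ k * t ^ k := by
      rw [ht, ← Real.mul_rpow hC.le (by positivity)]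
      congr 1
      field_simp
    have hCk : C ^ k = C ^ (k - 1) * C := by
      rw [← Real.rpow_add_one hC.ne' (k - 1)]
      ring_nf
    rw [le_div_iff₀ (by positivity)]
    have hzC : ‖z‖ - C = C * (t - 1) := by
      rw [ht]; field_simp
    rw [hzC, hzk, hCk]
    calc C * (t - 1) * ((k - 1) * C ^ (k - 1))
        = (C ^ (k - 1) * C) * ((k - 1) * (t - 1)) := by ring
      _ ≤ (C ^ (k - 1) * C) * t ^ k := by
          apply mul_le_mul_of_nonneg_left hkey (by positivity)
      _ = C ^ (k - 1) * C * t ^ k := by ring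

/-- The bias of the clipped empirical mean is at most
r̂^{(k)} / ((k−1)C^{k−1}), where r̂^{(k)} = (1/n)∑‖z_i‖^k is the k-th empirical moment. -/
theorem clipped_mean_bias {H : Type*} [NormedAddCommGroup H]
    [InnerProductSpace ℝ H] [CompleteSpace H]
    (C : ℝ) (hC : 0 < C) (k : ℝ) (hk : 2 ≤ k) (n : ℕ) (hn : 1 ≤ n)
    (z : Fin n → H) :
    ‖(1 / (n : ℝ)) • ∑ i, clip C (z i) - (1 / (n : ℝ)) • ∑ i, z i‖
      ≤ ((1 / (n : ℝ)) * ∑ i, ‖z i‖ ^ k) / ((k - 1) * C ^ (k - 1)) := by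
  have hn0 : (0:ℝ) < n := by exact_mod_cast hn
  rw [← smul_sub, ← Finset.sum_sub_distrib, norm_smul, Real.norm_eq_abs,
    abs_of_nonneg (by positivity)]
  have h1 : ‖∑ i, (clip C (z i) - z i)‖ ≤ ∑ i, ‖z i‖ ^ k / ((k - 1) * C ^ (k - 1)) :=
    (norm_sum_le _ _).trans (Finset.sum_le_sum fun i _ => clip_dist_le C hC k hk (z i))
  calc (1 / (n:ℝ)) * ‖∑ i, (clip C (z i) - z i)‖
      ≤ (1 / (n:ℝ)) * ∑ i, ‖z i‖ ^ k / ((k - 1) * C ^ (k - 1)) := by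
        apply mul_le_mul_of_nonneg_left h1 (by positivity)
    _ = ((1 / (n:ℝ)) * ∑ i, ‖z i‖ ^ k) / ((k - 1) * C ^ (k - 1)) := by
        rw [← Finset.sum_div, mul_div_assoc]
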